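/- Let K_* be an extended N-series acting on a filtered vector space W_* (i.e., there is a group homomorphism K_0 → Aut(W_*) of filtration-preserving automorphisms with [g, W_k] ⊆ W_{k+n} for g ∈ K_n, where [g,w] = g(w) − w). Then the induced map ρ_+ on associated graded objects, sending gK_{n+1} ∈ K_n/K_{n+1} to the map W_k/W_{k+1} → W_{k+n}/W_{k+n+1}, [v] ↦ [[g,v]], satisfies ρ_+([gK_{n+1}, hK_{n'+1}]) = [ρ_+(gK_{n+1}), ρ_+(hK_{n'+1})], where the left bracket is induced by the group commutator and the right bracket is the commutator of linear maps. -/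

import Mathlib

/-- The bracket `[g, v] = g(v) − v` for a group element acting linearly on a vector space. -/
def gbr {K M G : Type*} [Field K] [AddCommGroup M] [Module K M] [Group G]
    (ρ : G →* (M ≃ₗ[K] M)) (g : G) (v : M) : M :=
  ρ g v - v

/-- Let `K_* = (K_n)` be an extended N-series of a group `G` acting on a filtered vector space
`W = W_0 ⊇ W_1 ⊇ ⋯` (so `g ∈ K_n` satisfies `[g, W_k] ⊆ W_{k+n}`).  Then the induced maps
`ρ_+ : K_n/K_{n+1} → Hom(W_k/W_{k+1}, W_{k+n}/W_{k+n+1})`, `[g] ↦ ([v] ↦ [[g,v]])`, turn the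
group commutator into the commutator of linear maps: at the level of representatives, for
`g ∈ K_n`, `h ∈ K_n'` and `v ∈ W_k`,
`[[g,h], v] ≡ [g,[h,v]] − [h,[g,v]]  (mod W_{k+n+n'+1})`. -/
theorem stmt7 {K M G : Type*} [Field K] [CharZero K] [AddCommGroup M] [Module K M] [Group G]
    (ρ : G →* (M ≃ₗ[K] M))
    (Kf : ℕ → Subgroup G) (hK0 : Kf 0 = ⊤) (hKdesc : ∀ n, Kf (n + 1) ≤ Kf n)
    (hKcomm : ∀ n m : ℕ, ∀ x ∈ Kf n, ∀ y ∈ Kf m, x * y * x⁻¹ * y⁻¹ ∈ Kf (n + m))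
    (W : ℕ → Submodule K M) (hWdesc : ∀ k, W (k + 1) ≤ W k)
    (hact : ∀ n : ℕ, ∀ g ∈ Kf n, ∀ k, ∀ v ∈ W k, gbr ρ g v ∈ W (k + n))
    (n n' : ℕ) (hn : 1 ≤ n) (hn' : 1 ≤ n')
    (g : G) (hg : g ∈ Kf n) (h : G) (hh : h ∈ Kf n')
    (k : ℕ) (v : M) (hv : v ∈ W k) :
    gbr ρ (g * h * g⁻¹ * h⁻¹) v - (gbr ρ g (gbr ρ h v) - gbr ρ h (gbr ρ g v))
      ∈ W (k + n + n' + 1) := by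
  have e1 : ∀ (a b : G) (x : M), ρ (a * b) x = ρ a (ρ b x) := by
    intro a b x; rw [map_mul]; rfl
  have hWle : ∀ i j : ℕ, i ≤ j → W j ≤ W i := by
    intro i j hij
    induction hij with
    | refl => exact le_rfl
    | step _ ih => exact le_trans (hWdesc _) ih
  set c := g * h * g⁻¹ * h⁻¹ with hc
  have hcK : c ∈ Kf (n + n') := hKcomm n n' g hg h hh
  set w := gbr ρ (h * g) v with hw
  have hw1 : w ∈ W (k + 1) := by
    have e : w = gbr ρ h (gbr ρ g v) + gbr ρ g v + gbr ρ h v := by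
      simp only [hw, gbr, e1, map_sub]; abel
    rw [e]
    refine add_mem (add_mem ?_ ?_) ?_
    · exact hWle _ _ (by omega) (hact n' h hh _ _ (hact n g hg k v hv))
    · exact hWle _ _ (by omega) (hact n g hg k v hv)
    · exact hWle _ _ (by omega) (hact n' h hh k v hv)
  have e2 : ∀ (a : G) (x : M), ρ a⁻¹ (ρ a x) = x := by
    intro a x; rw [← e1, inv_mul_cancel, map_one]; rfl
  have hmain : gbr ρ c v - (gbr ρ g (gbr ρ h v) - gbr ρ h (gbr ρ g v))
      = - gbr ρ c w := by
    simp only [hw, hc, gbr, map_sub, e1, e2]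
    abel
  rw [hmain]
  have hmem : gbr ρ c w ∈ W (k + 1 + (n + n')) := hact (n + n') c hcK (k + 1) w hw1
  have heq : k + 1 + (n + n') = k + n + n' + 1 := by omega
  rw [heq] at hmem
  exact neg_mem hmem
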